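/- Let f be convex, differentiable, L-smooth with minimizer x⋆, t ∈ (0,1], and {θₖ} positive with θ₀ = 1 and 0 ≤ θ_{k+1}² − θ_{k+1} ≤ θₖ². For the unified method y_{k+1} = xₖ − (1/L)∇f(xₖ), z_{k+1} = zₖ − (2tθₖ/L)∇f(xₖ), x_{k+1} = (1 − 1/θ_{k+1})y_{k+1} + (1/θ_{k+1})z_{k+1}, x₀ = y₀ = z₀, one has f(yₖ) − f(x⋆) ≤ L‖x₀ − x⋆‖²/(4tθ_{k−1}²) for all k ≥ 1. -/

import Mathlib

open RealInnerProductSpace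

section AuxUnifiedAGMOGM

variable {E : Type*} [NormedAddCommGroup E] [InnerProductSpace ℝ E] [CompleteSpace E]

lemma unified_path_hasDerivAt (f : E → ℝ) (f' : E → E)
    (hdiff : ∀ x, HasGradientAt f (f' x) x) (v d : E) (s : ℝ) :
    HasDerivAt (fun r : ℝ => f (v + r • d)) ⟪f' (v + s • d), d⟫ s := by
  have hp : HasDerivAt (fun r : ℝ => v + r • d) d s := by
    simpa using (HasDerivAt.const_add v ((hasDerivAt_id s).smul_const d))
  have hf := (hdiff (v + s • d)).hasFDerivAt
  have := hf.comp_hasDerivAt s hp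
  exact this

/-- first-order convexity -/
lemma unified_grad_convex_lower (f : E → ℝ) (f' : E → E)
    (hdiff : ∀ x, HasGradientAt f (f' x) x)
    (hconv : ConvexOn ℝ Set.univ f) (u v : E) :
    f v + ⟪f' v, u - v⟫ ≤ f u := by
  set d := u - v with hd
  set g : ℝ → ℝ := fun r => f (v + r • d) with hg
  have hder : HasDerivAt g ⟪f' v, d⟫ 0 := by
    simpa using unified_path_hasDerivAt f f' hdiff v d 0
  have htend : Filter.Tendsto (slope g 0) (nhdsWithin 0 (Set.Ioi 0)) (nhds ⟪f' v, d⟫) := by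
    refine (hasDerivAt_iff_tendsto_slope.mp hder).mono_left ?_
    exact nhdsWithin_mono 0 (fun r hr => ne_of_gt hr)
  have hbound : ∀ᶠ s in nhdsWithin 0 (Set.Ioi 0), slope g 0 s ≤ f u - f v := by
    filter_upwards [Ioc_mem_nhdsGT_of_mem (Set.left_mem_Ico.mpr one_pos)] with s hs
    have hs0 : 0 < s := hs.1
    have hs1 : s ≤ 1 := hs.2
    have hcvx := hconv.2 (Set.mem_univ v) (Set.mem_univ u)
      (show (0:ℝ) ≤ 1 - s by linarith) (le_of_lt hs0) (by ring)
    have hpt : (1 - s) • v + s • u = v + s • d := by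
      rw [hd]; module
    rw [hpt] at hcvx
    have h2 : g s - g 0 ≤ s * (f u - f v) := by
      simp only [smul_eq_mul] at hcvx
      simp only [hg, zero_smul, add_zero]
      nlinarith [hcvx]
    rw [slope_def_field, sub_zero, div_le_iff₀ hs0]
    linarith
  have := le_of_tendsto htend hbound
  linarith

/-- quadratic upper bound (descent lemma form) -/
lemma unified_grad_quadratic_upper (f : E → ℝ) (f' : E → E) (L : ℝ) (hL : 0 < L)
    (hdiff : ∀ x, HasGradientAt f (f' x) x)
    (hsmooth : ∀ x y, ‖f' x - f' y‖ ≤ L * ‖x - y‖) (u v : E) :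
    f u ≤ f v + ⟪f' v, u - v⟫ + L / 2 * ‖u - v‖ ^ 2 := by
  set d := u - v with hd
  set ψ : ℝ → ℝ := fun s => f (v + s • d) - s * ⟪f' v, d⟫ - s ^ 2 * (L / 2 * ‖d‖ ^ 2)
    with hψ
  have hder : ∀ s : ℝ, HasDerivAt ψ
      (⟪f' (v + s • d), d⟫ - ⟪f' v, d⟫ - 2 * s * (L / 2 * ‖d‖ ^ 2)) s := by
    intro s
    have h1 := unified_path_hasDerivAt f f' hdiff v d s
    have h2 : HasDerivAt (fun s : ℝ => s * ⟪f' v, d⟫) ⟪f' v, d⟫ s := by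
      simpa using (hasDerivAt_id s).mul_const (⟪f' v, d⟫)
    have h3 : HasDerivAt (fun s : ℝ => s ^ 2 * (L / 2 * ‖d‖ ^ 2))
        (2 * s * (L / 2 * ‖d‖ ^ 2)) s := by
      have := (hasDerivAt_pow 2 s).mul_const (L / 2 * ‖d‖ ^ 2)
      simpa [mul_comm] using this
    exact (h1.sub h2).sub h3
  have hmono : AntitoneOn ψ (Set.Icc 0 1) := by
    apply antitoneOn_of_deriv_nonpos (convex_Icc 0 1)
    · have : Differentiable ℝ ψ := fun s => (hder s).differentiableAt
      exact this.continuous.continuousOn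
    · intro s _
      exact (hder s).differentiableAt.differentiableWithinAt
    · intro s hs
      rw [interior_Icc] at hs
      rw [(hder s).deriv]
      have hle : ⟪f' (v + s • d) - f' v, d⟫ ≤ L * s * ‖d‖ ^ 2 := by
        calc ⟪f' (v + s • d) - f' v, d⟫ ≤ ‖f' (v + s • d) - f' v‖ * ‖d‖ :=
              real_inner_le_norm _ _
          _ ≤ L * ‖(v + s • d) - v‖ * ‖d‖ := by
              have := hsmooth (v + s • d) v
              have hdn : (0:ℝ) ≤ ‖d‖ := norm_nonneg d
              nlinarith [this]
          _ = L * s * ‖d‖ ^ 2 := by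
              rw [add_sub_cancel_left, norm_smul]
              simp [abs_of_pos hs.1]
              ring
      have hinner : ⟪f' (v + s • d), d⟫ - ⟪f' v, d⟫ = ⟪f' (v + s • d) - f' v, d⟫ := by
        rw [inner_sub_left]
      rw [hinner]
      nlinarith [hle]
  have h01 := hmono (Set.left_mem_Icc.mpr zero_le_one) (Set.right_mem_Icc.mpr zero_le_one)
    zero_le_one
  simp only [hψ, zero_smul, add_zero, one_smul, zero_pow, one_pow, zero_mul, sub_zero,
    one_mul] at h01
  have : v + d = u := by rw [hd]; abel
  rw [this] at h01
  linarith

/-- cocoercivity, multiplied form -/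
lemma unified_grad_coco (f : E → ℝ) (f' : E → E) (L : ℝ) (hL : 0 < L)
    (hdiff : ∀ x, HasGradientAt f (f' x) x)
    (hconv : ConvexOn ℝ Set.univ f)
    (hsmooth : ∀ x y, ‖f' x - f' y‖ ≤ L * ‖x - y‖) (p q : E) :
    ‖f' q - f' p‖ ^ 2 ≤ 2 * L * (f q - f p - ⟪f' p, q - p⟫) := by
  set Δ := f' q - f' p with hΔ
  set w := q - (L⁻¹) • Δ with hw
  have h1 := unified_grad_convex_lower f f' hdiff hconv w p
  have h2 := unified_grad_quadratic_upper f f' L hL hdiff hsmooth w q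
  have hwq : w - q = -(L⁻¹) • Δ := by rw [hw]; module
  have e1 : ⟪f' q, w - q⟫ = -(L⁻¹) * ⟪f' q, Δ⟫ := by
    rw [hwq, real_inner_smul_right]
  have e2 : ‖w - q‖ ^ 2 = L⁻¹ ^ 2 * ‖Δ‖ ^ 2 := by
    rw [hwq, norm_smul]
    rw [norm_neg, norm_inv, Real.norm_eq_abs, abs_of_pos hL]
    ring
  have e3 : ⟪f' p, w - p⟫ = ⟪f' p, q - p⟫ - L⁻¹ * ⟪f' p, Δ⟫ := by
    have : w - p = (q - p) - L⁻¹ • Δ := by rw [hw]; abel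
    rw [this, inner_sub_right, real_inner_smul_right]
  have e4 : ⟪f' q, Δ⟫ - ⟪f' p, Δ⟫ = ‖Δ‖ ^ 2 := by
    rw [← inner_sub_left, ← hΔ, real_inner_self_eq_norm_sq]
  rw [e1, e2] at h2
  rw [e3] at h1
  have hL' : L⁻¹ * L = 1 := inv_mul_cancel₀ (ne_of_gt hL)
  have e5 : L⁻¹ * ⟪f' q, Δ⟫ - L⁻¹ * ⟪f' p, Δ⟫ = L⁻¹ * ‖Δ‖ ^ 2 := by
    rw [← mul_sub, e4]
  have e6 : L / 2 * (L⁻¹ ^ 2 * ‖Δ‖ ^ 2) = L⁻¹ * ‖Δ‖ ^ 2 / 2 := by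
    field_simp
  have key : L⁻¹ * ‖Δ‖ ^ 2 / 2 ≤ f q - f p - ⟪f' p, q - p⟫ := by
    rw [e6] at h2
    linarith [h1.trans h2]
  have e7 : L * (L⁻¹ * ‖Δ‖ ^ 2) = ‖Δ‖ ^ 2 := by
    rw [← mul_assoc, mul_inv_cancel₀ (ne_of_gt hL), one_mul]
  nlinarith [mul_le_mul_of_nonneg_left key (by positivity : (0:ℝ) ≤ 2 * L), e7]

/-- gradient-step descent, multiplied form -/
lemma unified_grad_descent (f : E → ℝ) (f' : E → E) (L : ℝ) (hL : 0 < L)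
    (hdiff : ∀ x, HasGradientAt f (f' x) x)
    (hsmooth : ∀ x y, ‖f' x - f' y‖ ≤ L * ‖x - y‖) (w : E) :
    2 * L * (f (w - (1 / L) • f' w) - f w) ≤ -‖f' w‖ ^ 2 := by
  have h := unified_grad_quadratic_upper f f' L hL hdiff hsmooth (w - (1 / L) • f' w) w
  have hsub : w - (1 / L) • f' w - w = -(1/L) • f' w := by module
  rw [hsub] at h
  rw [real_inner_smul_right, real_inner_self_eq_norm_sq] at h
  have hnrm : ‖(-(1/L)) • f' w‖ ^ 2 = (1/L)^2 * ‖f' w‖ ^ 2 := by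
    rw [norm_smul]
    rw [Real.norm_eq_abs, abs_neg, abs_of_pos (by positivity : (0:ℝ) < 1/L)]
    ring
  rw [hnrm] at h
  have e : -(1/L) * ‖f' w‖^2 + L/2*((1/L)^2*‖f' w‖^2) = -(1/(2*L))*‖f' w‖^2 := by
    field_simp
    ring
  have h' : f (w - (1 / L) • f' w) - f w ≤ -(1/(2*L))*‖f' w‖^2 := by
    rw [← e]; linarith
  have h'' := mul_le_mul_of_nonneg_left h' (le_of_lt (mul_pos two_pos hL))
  have e2 : 2*L*(-(1/(2*L))*‖f' w‖^2) = -‖f' w‖^2 := by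
    field_simp
  linarith [h'', e2.le, e2.ge]

lemma unified_norm_smul_sq (c : ℝ) (v : E) : ‖c • v‖ ^ 2 = c ^ 2 * ‖v‖ ^ 2 := by
  rw [norm_smul, Real.norm_eq_abs, mul_pow, sq_abs]

lemma unified_norm_expand (L c : ℝ) (u v w : E) (h : L • u = L • v - c • w) :
    L^2*‖u‖^2 = L^2*‖v‖^2 - 2*c*(L*⟪w, v⟫) + c^2*‖w‖^2 := by
  have e : ‖L • u‖^2 = ‖L • v - c • w‖^2 := by rw [h]
  rw [norm_sub_sq_real, unified_norm_smul_sq, unified_norm_smul_sq, unified_norm_smul_sq,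
    real_inner_smul_left, real_inner_smul_right] at e
  rw [real_inner_comm w v] at e
  linarith [e]

lemma unified_inner_expand (g : E) (L c1 c2 c3 : ℝ) (u v w p : E)
    (h : L • u = c1 • v - c2 • w + c3 • p) :
    L * ⟪g, u⟫ = c1*⟪g, v⟫ - c2*⟪g, w⟫ + c3*⟪g, p⟫ := by
  have e := congrArg (fun q => (⟪g, q⟫:ℝ)) h
  simpa only [inner_sub_right, inner_add_right, real_inner_smul_right] using e

end AuxUnifiedAGMOGM

set_option maxHeartbeats 1000000

/-- Convergence rate of the unified AGM/OGM family:
`f(yₖ) − f⋆ ≤ L‖x₀ − x⋆‖² / (4tθ_{k−1}²)` for `k ≥ 1`. -/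
theorem unified_agm_ogm_rate (n : ℕ)
    (f : EuclideanSpace ℝ (Fin n) → ℝ)
    (f' : EuclideanSpace ℝ (Fin n) → EuclideanSpace ℝ (Fin n))
    (L : ℝ) (hL : 0 < L)
    (hdiff : ∀ x, HasGradientAt f (f' x) x)
    (hconv : ConvexOn ℝ Set.univ f)
    (hsmooth : ∀ x y, ‖f' x - f' y‖ ≤ L * ‖x - y‖)
    (xstar : EuclideanSpace ℝ (Fin n)) (hmin : ∀ y, f xstar ≤ f y)
    (t : ℝ) (ht0 : 0 < t) (ht1 : t ≤ 1)
    (θ : ℕ → ℝ) (hθpos : ∀ k, 0 < θ k) (hθ0 : θ 0 = 1)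
    (hθrec : ∀ k, 0 ≤ θ (k + 1) ^ 2 - θ (k + 1) ∧ θ (k + 1) ^ 2 - θ (k + 1) ≤ θ k ^ 2)
    (x y z : ℕ → EuclideanSpace ℝ (Fin n))
    (hx0 : x 0 = y 0) (hz0 : z 0 = x 0)
    (hy : ∀ k, y (k + 1) = x k - (1 / L) • f' (x k))
    (hz : ∀ k, z (k + 1) = z k - (2 * t * θ k / L) • f' (x k))
    (hx : ∀ k, x (k + 1) = (1 - 1 / θ (k + 1)) • y (k + 1) + (1 / θ (k + 1)) • z (k + 1)) :
    ∀ k, 1 ≤ k →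
      f (y k) - f xstar ≤ L * ‖x 0 - xstar‖ ^ 2 / (4 * t * θ (k - 1) ^ 2) := by
  have hLne : L ≠ 0 := ne_of_gt hL
  -- gradient at the minimizer vanishes
  have hstar : f' xstar = 0 := by
    have hloc : IsLocalMin f xstar := Filter.Eventually.of_forall hmin
    have hzero := hloc.hasFDerivAt_eq_zero (hdiff xstar).hasFDerivAt
    have := congrArg (fun φ => (InnerProductSpace.toDual ℝ _).symm φ) hzero
    simpa using this
  -- the potential function
  set V : ℕ → ℝ := fun k => 2*t*L*θ k^2*(f (x k) - f xstar) - t*θ k^2*‖f' (x k)‖^2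
    + L^2/2*‖z (k+1) - xstar‖^2 with hV
  -- descent inequality at each iterate
  have hdesc : ∀ k, 2 * L * (f (y (k+1)) - f (x k)) ≤ -‖f' (x k)‖ ^ 2 := by
    intro k
    have := unified_grad_descent f f' L hL hdiff hsmooth (x k)
    rwa [← hy k] at this
  -- inequality I1 : at (xstar, x j)
  have hI1 : ∀ j, 2*L*(f (x j) - f xstar) ≤ 2*L*⟪f' (x j), x j - xstar⟫ - ‖f' (x j)‖^2 := by
    intro j
    have h := unified_grad_coco f f' L hL hdiff hconv hsmooth (x j) xstar
    rw [hstar, zero_sub, norm_neg] at h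
    have hm : ⟪f' (x j), xstar - x j⟫ = -⟪f' (x j), x j - xstar⟫ := by
      have hv : xstar - x j = -(x j - xstar) := by abel
      rw [hv, inner_neg_right]
    rw [hm] at h
    linarith
  -- base case : V 0 ≤ L^2/2 ‖x₀ - x⋆‖²
  have hV0 : V 0 ≤ L^2/2 * ‖x 0 - xstar‖^2 := by
    have hvz2 : L • (z 1 - xstar) = L • (x 0 - xstar) - (2*t*θ 0) • f' (x 0) := by
      rw [hz 0, hz0]
      match_scalars <;> field_simp <;> ring
    have hnorm : L^2*‖z 1 - xstar‖^2 = L^2*‖x 0 - xstar‖^2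
        - 2*(2*t*θ 0)*(L*⟪f' (x 0), x 0 - xstar⟫) + (2*t*θ 0)^2*‖f' (x 0)‖^2 :=
      unified_norm_expand L (2*t*θ 0) _ _ _ hvz2
    have h1 := hI1 0
    have s1 := mul_le_mul_of_nonneg_left h1 (le_of_lt ht0)
    have hGle : 0 ≤ (2*t - 2*t^2)*‖f' (x 0)‖^2 :=
      mul_nonneg (by nlinarith) (sq_nonneg _)
    simp only [hV, hθ0] at *
    linarith [hnorm, s1, hGle]
  -- the potential decreases
  have hstep : ∀ k, V (k+1) ≤ V k := by
    intro k
    have hθ1 : 0 < θ (k+1) := hθpos (k+1)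
    have hθne : θ (k+1) ≠ 0 := ne_of_gt hθ1
    have hτ : 0 < θ k := hθpos k
    obtain ⟨hb0, hba⟩ := hθrec k
    -- vector identity for z (k+1)
    have hvz : L • (z (k+1) - xstar) = (L*θ (k+1)) • (x (k+1) - xstar)
        - (L*(θ (k+1)-1)) • (x k - xstar) + (θ (k+1)-1) • f' (x k) := by
      have hxx := hx k
      rw [hy k] at hxx
      rw [hxx]
      match_scalars <;> field_simp <;> ring
    -- vector identity for z (k+2)
    have hvz2 : L • (z (k+2) - xstar) = L • (z (k+1) - xstar) - (2*t*θ (k+1)) • f' (x (k+1)) := by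
      rw [hz (k+1)]
      match_scalars <;> field_simp <;> ring
    -- scalar abbreviations
    set g := f' (x (k+1)) with hg
    set gh := f' (x k) with hgh
    set A := ⟪g, x (k+1) - xstar⟫ with hA
    set Bv := ⟪g, x k - xstar⟫ with hB
    set C := ⟪g, gh⟫ with hC
    -- inner product of g with z (k+1) - xstar
    have mD : L * ⟪g, z (k+1) - xstar⟫ = L*θ (k+1)*A - L*(θ (k+1)-1)*Bv + (θ (k+1)-1)*C :=
      unified_inner_expand g L _ _ _ _ _ _ _ hvz
    have mD2 : 4*t*θ (k+1)*(L * ⟪g, z (k+1) - xstar⟫)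
        = 4*t*θ (k+1)*(L*θ (k+1)*A - L*(θ (k+1)-1)*Bv + (θ (k+1)-1)*C) := by
      rw [mD]
    -- norm expansion for z (k+2)
    have mZ : L^2*‖z (k+2) - xstar‖^2 = L^2*‖z (k+1) - xstar‖^2
        - 2*(2*t*θ (k+1))*(L*⟪g, z (k+1) - xstar⟫) + (2*t*θ (k+1))^2*‖g‖^2 :=
      unified_norm_expand L (2*t*θ (k+1)) _ _ _ hvz2
    -- inequality I2 : at (x k, x (k+1))
    have hI2 : 2*L*(f (x (k+1)) - f (x k)) ≤ 2*L*(A - Bv) - (‖gh‖^2 - 2*C + ‖g‖^2) := by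
      have h := unified_grad_coco f f' L hL hdiff hconv hsmooth (x (k+1)) (x k)
      have hmm : ⟪g, x k - x (k+1)⟫ = Bv - A := by
        have hv : x k - x (k+1) = (x k - xstar) - (x (k+1) - xstar) := by abel
        rw [hv, inner_sub_right]
      rw [hmm] at h
      have hexp : ‖gh - g‖^2 = ‖gh‖^2 - 2*C + ‖g‖^2 := by
        rw [norm_sub_sq_real, real_inner_comm]
      rw [hexp] at h
      linarith
    -- combined with minimality of xstar
    have hI3 : 2*L*(f xstar - f (x k)) ≤ -‖gh‖^2 := by
      have h1 := hdesc k
      have h2 := mul_le_mul_of_nonneg_left (hmin (y (k+1))) (le_of_lt (mul_pos two_pos hL))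
      linarith
    have hI1' := hI1 (k+1)
    -- scale the inequalities
    have c1 : 0 ≤ t*θ (k+1) := (mul_pos ht0 hθ1).le
    have c2 : 0 ≤ t*(θ (k+1)^2 - θ (k+1)) := mul_nonneg ht0.le hb0
    have c3 : 0 ≤ t*(θ k^2 - (θ (k+1)^2 - θ (k+1))) := mul_nonneg ht0.le (by linarith)
    have s1 := mul_le_mul_of_nonneg_left hI1' c1
    have s2 := mul_le_mul_of_nonneg_left hI2 c2
    have s3 := mul_le_mul_of_nonneg_left hI3 c3
    have hGnonneg : t*θ (k+1)^2*(2*t-2)*‖g‖^2 ≤ 0 := by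
      have h1 : t*θ (k+1)^2*(2*t-2) ≤ 0 :=
        mul_nonpos_of_nonneg_of_nonpos (mul_nonneg ht0.le (sq_nonneg _)) (by linarith)
      exact mul_nonpos_of_nonpos_of_nonneg h1 (sq_nonneg _)
    simp only [hV]
    linarith [s1, s2, s3, mZ, mD2, hGnonneg]
  -- V k bounded by initial value
  have hVle : ∀ k, V k ≤ L^2/2 * ‖x 0 - xstar‖^2 := by
    intro k
    induction k with
    | zero => exact hV0
    | succ m ih => exact (hstep m).trans ih
  -- extraction at each step
  have hext : ∀ k, 2*t*L*θ k^2*(f (y (k+1)) - f xstar) ≤ V k := by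
    intro k
    have h1 := hdesc k
    have c : 0 ≤ t*θ k^2 := mul_nonneg ht0.le (sq_nonneg _)
    have s := mul_le_mul_of_nonneg_left h1 c
    have h2 : 0 ≤ L^2/2*‖z (k+1) - xstar‖^2 := by positivity
    have h3 := mul_le_mul_of_nonneg_left (hmin (y (k+1))) (le_of_lt (mul_pos two_pos hL))
    simp only [hV]
    nlinarith [s, h2]
  -- conclude
  intro k hk
  obtain ⟨m, rfl⟩ : ∃ m, k = m + 1 := ⟨k - 1, (Nat.succ_pred_eq_of_pos hk).symm⟩
  simp only [Nat.add_sub_cancel]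
  have key : 2*t*L*θ m^2*(f (y (m+1)) - f xstar) ≤ L^2/2 * ‖x 0 - xstar‖^2 :=
    (hext m).trans (hVle m)
  have hpos : 0 < 4*t*θ m^2 :=
    mul_pos (mul_pos (by norm_num) ht0) (pow_pos (hθpos m) 2)
  rw [le_div_iff₀ hpos]
  have hmul : L * ((f (y (m+1)) - f xstar) * (4*t*θ m^2)) ≤ L * (L * ‖x 0 - xstar‖^2) := by
    nlinarith [key]
  exact le_of_mul_le_mul_left hmul hL
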